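/- Let F be a formally real field (i.e., −1 is not a sum of squares in F) and let a ∈ F be nonzero. Then the ring F[X,Y]/(X² + Y² + a²) is a unique factorization domain. -/

import Mathlib

open MvPolynomial

set_option maxHeartbeats 1000000
set_option synthInstance.maxHeartbeats 400000

namespace S18

open Polynomial AdjoinRoot

variable {F : Type} [Field F]

noncomputable def mp (a : F) : Polynomial F := Polynomial.X ^ 2 + Polynomial.C (a ^ 2)

noncomputable def gp (a : F) : Polynomial (Polynomial F) :=
  Polynomial.X ^ 2 + Polynomial.C (mp a)

abbrev S (a : F) := AdjoinRoot (gp a)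

theorem mp_monic (a : F) : (mp a).Monic := Polynomial.monic_X_pow_add_C _ two_ne_zero

theorem mp_natDegree (a : F) : (mp a).natDegree = 2 := Polynomial.natDegree_X_pow_add_C

theorem gp_monic (a : F) : (gp a).Monic := Polynomial.monic_X_pow_add_C _ two_ne_zero

theorem gp_degree (a : F) : (gp a).degree = 2 := by
  rw [gp]; exact_mod_cast Polynomial.degree_X_pow_add_C (by norm_num) (mp a)

theorem degree_lt_two {r : Polynomial (Polynomial F)} (h : r.degree < 2) : r.degree ≤ 1 := by
  rcases hd : r.degree with _ | n
  · exact bot_le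
  · rw [hd, WithBot.some_eq_coe] at h
    rw [WithBot.some_eq_coe]
    have hn : n < 2 := by
      have := WithBot.coe_lt_coe.mp (show (n : WithBot ℕ) < ((2:ℕ) : WithBot ℕ) from h)
      exact this
    have hle : n ≤ 1 := by omega
    exact WithBot.coe_le_coe.mpr hle

theorem rel (a : F) : (root (gp a)) ^ 2 = - (AdjoinRoot.of (gp a)) (mp a) := by
  have h0 : AdjoinRoot.mk (gp a) (Polynomial.X ^ 2 + Polynomial.C (mp a)) = 0 := by
    rw [← gp]; exact mk_self
  rw [map_add, map_pow, mk_X, AdjoinRoot.mk_C] at h0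
  linear_combination h0

theorem rep (a : F) (s : S a) : ∃ p q : Polynomial F,
    s = AdjoinRoot.of (gp a) p + AdjoinRoot.of (gp a) q * root (gp a) := by
  obtain ⟨h, rfl⟩ := AdjoinRoot.mk_surjective s
  set r := h %ₘ gp a with hr
  set c0 := r.coeff 0 with hc0
  set c1 := r.coeff 1 with hc1
  refine ⟨c0, c1, ?_⟩
  have h1 : AdjoinRoot.mk (gp a) h = AdjoinRoot.mk (gp a) r := by
    rw [AdjoinRoot.mk_eq_mk]
    exact ⟨h /ₘ gp a, by linear_combination (Polynomial.modByMonic_add_div h (gp a)).symm⟩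
  have h2 : r = Polynomial.C c1 * Polynomial.X + Polynomial.C c0 := by
    apply Polynomial.eq_X_add_C_of_degree_le_one
    exact degree_lt_two (by rw [← gp_degree a]; exact Polynomial.degree_modByMonic_lt h (gp_monic a))
  rw [h1, h2, map_add, map_mul, AdjoinRoot.mk_C, AdjoinRoot.mk_C, mk_X]
  ring

theorem uniq0 (a : F) (p q : Polynomial F)
    (h : AdjoinRoot.of (gp a) p + AdjoinRoot.of (gp a) q * root (gp a) = 0) :
    p = 0 ∧ q = 0 := by
  have h1 : AdjoinRoot.mk (gp a) (Polynomial.C q * Polynomial.X + Polynomial.C p) = 0 := by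
    rw [map_add, map_mul, AdjoinRoot.mk_C, AdjoinRoot.mk_C, mk_X]
    linear_combination h
  rw [AdjoinRoot.mk_eq_zero] at h1
  have h2 : Polynomial.C q * Polynomial.X + Polynomial.C p = 0 := by
    apply Polynomial.eq_zero_of_dvd_of_degree_lt h1
    rw [gp_degree a]
    exact lt_of_le_of_lt (Polynomial.degree_linear_le) (by norm_num)
  constructor
  · have := congrArg (fun r => Polynomial.coeff r 0) h2; simpa using this
  · have := congrArg (fun r => Polynomial.coeff r 1) h2; simpa using this

theorem uniq (a : F) (p q p' q' : Polynomial F)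
    (h : AdjoinRoot.of (gp a) p + AdjoinRoot.of (gp a) q * root (gp a)
       = AdjoinRoot.of (gp a) p' + AdjoinRoot.of (gp a) q' * root (gp a)) :
    p = p' ∧ q = q' := by
  have h0 : AdjoinRoot.of (gp a) (p - p') + AdjoinRoot.of (gp a) (q - q') * root (gp a) = 0 := by
    rw [map_sub, map_sub]; linear_combination h
  obtain ⟨h1, h2⟩ := uniq0 a _ _ h0
  exact ⟨by linear_combination h1, by linear_combination h2⟩

theorem of_injective (a : F) (p p' : Polynomial F)
    (h : AdjoinRoot.of (gp a) p = AdjoinRoot.of (gp a) p') : p = p' := by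
  have := uniq a p 0 p' 0 (by rw [map_zero]; linear_combination h)
  exact this.1


theorem eval₂_gp (a : F) {T : Type} [CommRing T] (i : Polynomial F →+* T) (x : T) :
    Polynomial.eval₂ i x (gp a) = x ^ 2 + i (mp a) := by
  simp [gp]

/-- conjugation on `S a`. -/
noncomputable def conj (a : F) : S a →+* S a :=
  AdjoinRoot.lift (AdjoinRoot.of (gp a)) (-(root (gp a))) (by
    rw [eval₂_gp, neg_sq, rel a]
    ring)

theorem conj_of (a : F) (p : Polynomial F) :
    conj a (AdjoinRoot.of (gp a) p) = AdjoinRoot.of (gp a) p := AdjoinRoot.lift_of _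

theorem conj_root (a : F) : conj a (root (gp a)) = -(root (gp a)) := AdjoinRoot.lift_root _

theorem normEq (a : F) (p q : Polynomial F) :
    (AdjoinRoot.of (gp a) p + AdjoinRoot.of (gp a) q * root (gp a)) *
      conj a (AdjoinRoot.of (gp a) p + AdjoinRoot.of (gp a) q * root (gp a))
    = AdjoinRoot.of (gp a) (p ^ 2 + q ^ 2 * mp a) := by
  rw [map_add, map_mul, conj_of, conj_of, conj_root]
  have h : (AdjoinRoot.of (gp a) p + AdjoinRoot.of (gp a) q * root (gp a)) *
      (AdjoinRoot.of (gp a) p + AdjoinRoot.of (gp a) q * -root (gp a))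
      = (AdjoinRoot.of (gp a) p) ^ 2 - (AdjoinRoot.of (gp a) q) ^ 2 * (root (gp a)) ^ 2 := by
    ring
  rw [h, rel a, map_add, map_mul, map_pow, map_pow]
  ring

theorem mul_rep (a : F) (p q u v : Polynomial F) :
    (AdjoinRoot.of (gp a) p + AdjoinRoot.of (gp a) q * root (gp a)) *
      (AdjoinRoot.of (gp a) u + AdjoinRoot.of (gp a) v * root (gp a))
    = AdjoinRoot.of (gp a) (p * u - q * v * mp a)
      + AdjoinRoot.of (gp a) (p * v + q * u) * root (gp a) := by
  have h : (AdjoinRoot.of (gp a) p + AdjoinRoot.of (gp a) q * root (gp a)) *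
      (AdjoinRoot.of (gp a) u + AdjoinRoot.of (gp a) v * root (gp a))
      = (AdjoinRoot.of (gp a) p * AdjoinRoot.of (gp a) u
         + AdjoinRoot.of (gp a) q * AdjoinRoot.of (gp a) v * (root (gp a))^2)
        + (AdjoinRoot.of (gp a) p * AdjoinRoot.of (gp a) v
           + AdjoinRoot.of (gp a) q * AdjoinRoot.of (gp a) u) * root (gp a) := by ring
  rw [h, rel a, map_sub, map_add, map_mul, map_mul, map_mul, map_mul, map_mul]
  ring

theorem of_dvd (a : F) (e u v : Polynomial F) :
    AdjoinRoot.of (gp a) e ∣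
      (AdjoinRoot.of (gp a) u + AdjoinRoot.of (gp a) v * root (gp a)) ↔ e ∣ u ∧ e ∣ v := by
  constructor
  · rintro ⟨s, hs⟩
    obtain ⟨α, β, rfl⟩ := rep a s
    rw [mul_add, ← map_mul, ← mul_assoc, ← map_mul] at hs
    obtain ⟨h1, h2⟩ := uniq a u v (e * α) (e * β) hs
    exact ⟨⟨α, h1⟩, ⟨β, h2⟩⟩
  · rintro ⟨⟨u', rfl⟩, ⟨v', rfl⟩⟩
    exact ⟨AdjoinRoot.of (gp a) u' + AdjoinRoot.of (gp a) v' * root (gp a), by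
      rw [mul_add, ← map_mul, ← mul_assoc, ← map_mul]⟩

/-- anisotropy of the form `p² + q² m` over `F[X]` for formally real `F`. -/
theorem aniso (h1 : ∀ b : F, b ^ 2 ≠ -1) (a : F) (p q : Polynomial F)
    (h : p ^ 2 + q ^ 2 * mp a = 0) : p = 0 ∧ q = 0 := by
  by_cases hq : q = 0
  · subst hq
    have h' : p ^ 2 = 0 := by linear_combination h
    exact ⟨pow_eq_zero_iff two_ne_zero |>.mp h', rfl⟩
  · exfalso
    have hm0 : mp a ≠ 0 := (mp_monic a).ne_zero
    have hp2 : p ^ 2 = -(q ^ 2 * mp a) := by linear_combination h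
    have hp : p ≠ 0 := by
      intro h0
      rw [h0] at hp2
      have hqm : q ^ 2 * mp a = 0 := by linear_combination hp2
      rcases mul_eq_zero.mp hqm with h' | h'
      · exact hq (pow_eq_zero_iff two_ne_zero |>.mp h')
      · exact hm0 h'
    have hlc := congrArg Polynomial.leadingCoeff hp2
    rw [Polynomial.leadingCoeff_pow, Polynomial.leadingCoeff_neg, Polynomial.leadingCoeff_mul,
      Polynomial.leadingCoeff_pow, (mp_monic a).leadingCoeff, mul_one] at hlc
    apply h1 (p.leadingCoeff / q.leadingCoeff)
    have hql : q.leadingCoeff ≠ 0 := Polynomial.leadingCoeff_ne_zero.mpr hq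
    field_simp
    linear_combination hlc

/-- if `of f ∈ N` for a prime `N`, with `f` irreducible, then `N ∩ F[X] = (f)`. -/
theorem comap_eq (a : F) (N : Ideal (S a)) (hN : N.IsPrime) (f : Polynomial F)
    (hfi : Irreducible f) (hfN : AdjoinRoot.of (gp a) f ∈ N) :
    Ideal.comap (AdjoinRoot.of (gp a)) N = Ideal.span {f} := by
  have hmax : (Ideal.span {f}).IsMaximal := PrincipalIdealRing.isMaximal_of_irreducible hfi
  have hle : Ideal.span {f} ≤ Ideal.comap (AdjoinRoot.of (gp a)) N := by
    rw [Ideal.span_le, Set.singleton_subset_iff]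
    exact hfN
  exact (hmax.eq_of_le (hN.comap (AdjoinRoot.of (gp a))).ne_top hle).symm

/-- if `N` is a prime ideal containing `z = p + q·θ` whose norm is `f` times a unit,
then `N = (z)`. -/
theorem lemA (a : F) (N : Ideal (S a)) (hN : N.IsPrime) (f c p q : Polynomial F)
    (hfi : Irreducible f) (hc : IsUnit c)
    (hz : AdjoinRoot.of (gp a) p + AdjoinRoot.of (gp a) q * root (gp a) ∈ N)
    (hn : p ^ 2 + q ^ 2 * mp a = f * c) :
    N = Ideal.span {AdjoinRoot.of (gp a) p + AdjoinRoot.of (gp a) q * root (gp a)} := by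
  have hfp : Prime f := hfi.prime
  set z := AdjoinRoot.of (gp a) p + AdjoinRoot.of (gp a) q * root (gp a) with hzdef
  -- `of f ∈ N`
  have hfc : z * conj a z = AdjoinRoot.of (gp a) f * AdjoinRoot.of (gp a) c := by
    rw [hzdef, normEq, hn, map_mul]
  have hcu : IsUnit (AdjoinRoot.of (gp a) c) := hc.map _
  have hfN : AdjoinRoot.of (gp a) f ∈ N := by
    have hmem : AdjoinRoot.of (gp a) f * AdjoinRoot.of (gp a) c ∈ N := by
      rw [← hfc]; exact Ideal.mul_mem_right _ N hz
    rcases hN.mem_or_mem hmem with h | h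
    · exact h
    · exact absurd (N.eq_top_of_isUnit_mem h hcu) hN.ne_top
  have hcom := comap_eq a N hN f hfi hfN
  -- `f ∤ q`
  have hfq : ¬ f ∣ q := by
    intro hq
    have hfp2 : f ∣ p ^ 2 := by
      obtain ⟨q', rfl⟩ := hq
      exact ⟨c - f * q' ^ 2 * mp a, by linear_combination hn⟩
    have hfp' : f ∣ p := hfp.dvd_of_dvd_pow hfp2
    obtain ⟨p', rfl⟩ := hfp'
    obtain ⟨q', rfl⟩ := hq
    have hem : f * (p' ^ 2 + q' ^ 2 * mp a) = c := by
      apply mul_left_cancel₀ hfi.ne_zero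
      linear_combination hn
    exact hfi.not_isUnit (isUnit_of_dvd_unit ⟨_, hem.symm⟩ hc)
  have hc0 : c ≠ 0 := fun h0 => by simp [h0] at hc
  have hfc0 : f * c ≠ 0 := mul_ne_zero hfi.ne_zero hc0
  obtain ⟨cinv, hcinv⟩ := hc.exists_right_inv
  apply le_antisymm
  · intro s hs
    obtain ⟨u, v, rfl⟩ := rep a s
    -- f ∣ q*u - p*v
    have h1 : AdjoinRoot.of (gp a) (q * u - p * v) ∈ N := by
      have : AdjoinRoot.of (gp a) (q * u - p * v)
          = AdjoinRoot.of (gp a) q * (AdjoinRoot.of (gp a) u + AdjoinRoot.of (gp a) v * root (gp a))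
            - AdjoinRoot.of (gp a) v * z := by
        rw [hzdef, map_sub, map_mul, map_mul]; ring
      rw [this]
      exact Ideal.sub_mem N (Ideal.mul_mem_left N _ hs) (Ideal.mul_mem_left N _ hz)
    have h1' : f ∣ q * u - p * v := by
      have : q * u - p * v ∈ Ideal.comap (AdjoinRoot.of (gp a)) N := h1
      rw [hcom] at this
      exact Ideal.mem_span_singleton.mp this
    -- f ∣ p*u + q*(mp a)*v
    have h2 : f ∣ p * u + q * mp a * v := by
      have hkey : f ∣ q * (p * u + q * mp a * v) := by
        have : q * (p * u + q * mp a * v) = p * (q * u - p * v) + v * (p ^ 2 + q ^ 2 * mp a) := by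
          ring
        rw [this, hn]
        exact dvd_add (h1'.mul_left p) ⟨c * v, by ring⟩
      exact (hfp.dvd_or_dvd hkey).resolve_left hfq
    obtain ⟨A0, hA0⟩ := h2
    obtain ⟨B0, hB0⟩ := h1'
    set A := cinv * A0 with hA
    set B := -(cinv * B0) with hB
    have hA' : f * c * A = p * u + q * mp a * v := by
      rw [hA0, hA]
      calc f * c * (cinv * A0) = (c * cinv) * (f * A0) := by ring
      _ = f * A0 := by rw [hcinv, one_mul]
    have hB' : f * c * B = p * v - q * u := by
      rw [hB]
      calc f * c * -(cinv * B0) = (c * cinv) * (-(f * B0)) := by ring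
      _ = -(f * B0) := by rw [hcinv, one_mul]
      _ = p * v - q * u := by rw [← hB0]; ring
    refine Ideal.mem_span_singleton.mpr
      ⟨AdjoinRoot.of (gp a) A + AdjoinRoot.of (gp a) B * root (gp a), ?_⟩
    rw [hzdef, mul_rep]
    have e1 : p * A - q * B * mp a = u := by
      apply mul_left_cancel₀ hfc0
      linear_combination p * hA' - q * mp a * hB' + u * hn
    have e2 : p * B + q * A = v := by
      apply mul_left_cancel₀ hfc0
      linear_combination p * hB' + q * hA' + v * hn
    rw [e1, e2]
  · rw [Ideal.span_le, Set.singleton_subset_iff]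
    exact hz

/-- exit case of the descent: the cofactor of the norm is a unit. -/
theorem exitA (a : F) (f : Polynomial F) (hfi : Irreducible f)
    (N : Ideal (S a)) (hN : N.IsPrime) (G p q : Polynomial F) (hGu : IsUnit G)
    (hzN : AdjoinRoot.of (gp a) p + AdjoinRoot.of (gp a) q * root (gp a) ∈ N)
    (hn : p ^ 2 + q ^ 2 * mp a = f * G) :
    ∃ p' q' : Polynomial F,
      N = Ideal.span {AdjoinRoot.of (gp a) p' + AdjoinRoot.of (gp a) q' * root (gp a)} ∧
        (p' ^ 2 + q' ^ 2 * mp a) ∣ f ^ 2 := by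
  refine ⟨p, q, lemA a N hN f G p q hfi hGu hzN hn, ?_⟩
  rw [hn, sq]
  exact mul_dvd_mul_left f hGu.dvd

/-- the inner descent: dividing out the small primes of the norm. -/
theorem inner (a : F) (f : Polynomial F) (hfi : Irreducible f)
    (N : Ideal (S a)) (hN : N.IsPrime) (hfN : AdjoinRoot.of (gp a) f ∈ N)
    (hrec : ∀ h : Polynomial F, h.Monic → Irreducible h → h.natDegree < f.natDegree →
      ∀ M : Ideal (S a), M.IsPrime → AdjoinRoot.of (gp a) h ∈ M →
      ∃ p q : Polynomial F,
        M = Ideal.span {AdjoinRoot.of (gp a) p + AdjoinRoot.of (gp a) q * root (gp a)} ∧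
          (p ^ 2 + q ^ 2 * mp a) ∣ h ^ 2) :
    ∀ j : ℕ, ∀ G p q : Polynomial F, G.natDegree ≤ j → G ≠ 0 →
      (∀ h' : Polynomial F, Irreducible h' → h' ∣ G → h'.natDegree < f.natDegree) →
      (AdjoinRoot.of (gp a) p + AdjoinRoot.of (gp a) q * root (gp a)) ∈ N →
      (∀ e : Polynomial F,
        AdjoinRoot.of (gp a) e ∣ (AdjoinRoot.of (gp a) p + AdjoinRoot.of (gp a) q * root (gp a))
          → IsUnit e) →
      p ^ 2 + q ^ 2 * mp a = f * G →
      ∃ p' q' : Polynomial F,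
        N = Ideal.span {AdjoinRoot.of (gp a) p' + AdjoinRoot.of (gp a) q' * root (gp a)} ∧
          (p' ^ 2 + q' ^ 2 * mp a) ∣ f ^ 2 := by
  have hfp : Prime f := hfi.prime
  intro j
  induction j with
  | zero =>
    intro G p q hGj hG0 hGfac hzN hprim hn
    have hGu : IsUnit G := by
      have hdeg : G.natDegree = 0 := Nat.le_zero.mp hGj
      obtain ⟨cG, hcG⟩ := Polynomial.natDegree_eq_zero.mp hdeg
      rw [← hcG]
      exact Polynomial.isUnit_C.mpr
        (isUnit_iff_ne_zero.mpr (fun h0 => hG0 (by rw [← hcG, h0, Polynomial.C_0])))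
    exact exitA a f hfi N hN G p q hGu hzN hn
  | succ j ihj =>
    intro G p q hGj hG0 hGfac hzN hprim hn
    by_cases hGu : IsUnit G
    · exact exitA a f hfi N hN G p q hGu hzN hn
    set z := AdjoinRoot.of (gp a) p + AdjoinRoot.of (gp a) q * root (gp a) with hzdef
    obtain ⟨h, hhm, hhi, hhG⟩ := Polynomial.exists_monic_irreducible_factor G hGu
    obtain ⟨G1, hG1⟩ := hhG
    -- the ideal generated by z and h is proper
    have hIne : (Ideal.span {z, AdjoinRoot.of (gp a) h} : Ideal (S a)) ≠ ⊤ := by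
      intro htop
      have h1mem : (1 : S a) ∈ Ideal.span {z, AdjoinRoot.of (gp a) h} := by
        rw [htop]; trivial
      obtain ⟨α, β, hab⟩ := Ideal.mem_span_pair.mp h1mem
      have hσ : conj a z = α * (z * conj a z) + β * AdjoinRoot.of (gp a) h * conj a z := by
        calc conj a z = (α * z + β * AdjoinRoot.of (gp a) h) * conj a z := by rw [hab, one_mul]
        _ = _ := by ring
      have hσ2 : z * conj a z = AdjoinRoot.of (gp a) (h * (f * G1)) := by
        rw [hzdef, normEq, hn, hG1]
        ring_nf
      have hdvd : AdjoinRoot.of (gp a) h ∣ conj a (z) := by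
        refine ⟨α * AdjoinRoot.of (gp a) (f * G1) + β * conj a z, ?_⟩
        conv_lhs => rw [hσ, hσ2, map_mul]
        ring
      have hσz : conj a z = AdjoinRoot.of (gp a) p + AdjoinRoot.of (gp a) (-q) * root (gp a) := by
        rw [hzdef, map_add, map_mul, conj_of, conj_of, conj_root, map_neg]
        ring
      rw [hσz] at hdvd
      obtain ⟨hp', hq'⟩ := (of_dvd a h p (-q)).mp hdvd
      have : AdjoinRoot.of (gp a) h ∣ z := by
        rw [hzdef]
        exact (of_dvd a h p q).mpr ⟨hp', (dvd_neg.mp hq')⟩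
      exact hhi.not_isUnit (hprim h this)
    obtain ⟨M, hMmax, hMle⟩ := Ideal.exists_le_maximal _ hIne
    have hzM : z ∈ M := hMle (Ideal.subset_span (by simp))
    have hhM : AdjoinRoot.of (gp a) h ∈ M := hMle (Ideal.subset_span (by simp))
    have hMp : M.IsPrime := hMmax.isPrime
    have hhf : h.natDegree < f.natDegree := hGfac h hhi ⟨G1, hG1⟩
    obtain ⟨pw, qw, hMw, hnw⟩ := hrec h hhm hhi hhf M hMp hhM
    set w := AdjoinRoot.of (gp a) pw + AdjoinRoot.of (gp a) qw * root (gp a) with hwdef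
    -- w ∉ N
    have hwN : w ∉ N := by
      intro hwN
      have hMN : M ≤ N := by
        rw [hMw, Ideal.span_le, Set.singleton_subset_iff]
        exact hwN
      have hNM : N = M := ((hMmax.eq_of_le hN.ne_top hMN)).symm
      have hcom := comap_eq a N hN f hfi hfN
      have hhcom : h ∈ Ideal.comap (AdjoinRoot.of (gp a)) N := by
        rw [Ideal.mem_comap, hNM]
        exact hhM
      rw [hcom] at hhcom
      have hfh : f ∣ h := Ideal.mem_span_singleton.mp hhcom
      have := Polynomial.natDegree_le_of_dvd hfh hhi.ne_zero
      omega
    obtain ⟨z1, hz1⟩ : w ∣ z := Ideal.mem_span_singleton.mp (by rw [← hMw]; exact hzM)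
    have hz1N : z1 ∈ N := by
      rcases hN.mem_or_mem (show w * z1 ∈ N by rw [← hz1]; exact hzN) with h' | h'
      · exact absurd h' hwN
      · exact h'
    obtain ⟨p1, q1, hz1rep⟩ := rep a z1
    rw [hz1rep] at hz1 hz1N
    -- norm multiplicativity
    have hnmul : f * G = (pw ^ 2 + qw ^ 2 * mp a) * (p1 ^ 2 + q1 ^ 2 * mp a) := by
      apply of_injective a
      calc AdjoinRoot.of (gp a) (f * G) = z * conj a z := by
            rw [← hn, hzdef]
            exact (normEq a p q).symm
      _ = (w * (AdjoinRoot.of (gp a) p1 + AdjoinRoot.of (gp a) q1 * root (gp a)))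
            * conj a (w * (AdjoinRoot.of (gp a) p1 + AdjoinRoot.of (gp a) q1 * root (gp a))) := by
            rw [← hz1]
      _ = (w * conj a w) * ((AdjoinRoot.of (gp a) p1 + AdjoinRoot.of (gp a) q1 * root (gp a))
            * conj a (AdjoinRoot.of (gp a) p1 + AdjoinRoot.of (gp a) q1 * root (gp a))) := by
            rw [map_mul]
            ring
      _ = AdjoinRoot.of (gp a) (pw ^ 2 + qw ^ 2 * mp a)
            * AdjoinRoot.of (gp a) (p1 ^ 2 + q1 ^ 2 * mp a) := by
            rw [hwdef, normEq, normEq]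
      _ = AdjoinRoot.of (gp a) ((pw ^ 2 + qw ^ 2 * mp a) * (p1 ^ 2 + q1 ^ 2 * mp a)) :=
            (map_mul _ _ _).symm
    have hfnw : ¬ f ∣ (pw ^ 2 + qw ^ 2 * mp a) := by
      intro hdv
      have hfh2 : f ∣ h ^ 2 := hdv.trans hnw
      have hfh : f ∣ h := hfp.dvd_of_dvd_pow hfh2
      have := Polynomial.natDegree_le_of_dvd hfh hhi.ne_zero
      omega
    have hfd : f ∣ (p1 ^ 2 + q1 ^ 2 * mp a) := by
      have hfd1 : f ∣ (pw ^ 2 + qw ^ 2 * mp a) * (p1 ^ 2 + q1 ^ 2 * mp a) := by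
        rw [← hnmul]
        exact dvd_mul_right f G
      exact (hfp.dvd_or_dvd hfd1).resolve_left hfnw
    obtain ⟨G', hG'eq⟩ := hfd
    have hGsplit : G = (pw ^ 2 + qw ^ 2 * mp a) * G' := by
      apply mul_left_cancel₀ hfi.ne_zero
      rw [hnmul, hG'eq]
      ring
    have hnw0 : (pw ^ 2 + qw ^ 2 * mp a) ≠ 0 := fun h0 => hG0 (by rw [hGsplit, h0, zero_mul])
    have hG'0 : G' ≠ 0 := fun h0 => hG0 (by rw [hGsplit, h0, mul_zero])
    have hnwu : ¬ IsUnit (pw ^ 2 + qw ^ 2 * mp a) := by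
      intro hu
      obtain ⟨c', hc'⟩ := hu.exists_right_inv
      have hwu : IsUnit w := by
        apply IsUnit.of_mul_eq_one (a := w) (conj a w * AdjoinRoot.of (gp a) c')
        rw [← mul_assoc, hwdef, normEq, ← map_mul, hc', map_one]
      exact hMmax.ne_top (by
        rw [hMw]
        exact Ideal.span_singleton_eq_top.mpr hwu)
    have hdegG' : G'.natDegree ≤ j := by
      have hmul : G.natDegree = (pw ^ 2 + qw ^ 2 * mp a).natDegree + G'.natDegree := by
        rw [hGsplit]
        exact Polynomial.natDegree_mul hnw0 hG'0
      have hne0 : (pw ^ 2 + qw ^ 2 * mp a).natDegree ≠ 0 := by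
        intro h0
        obtain ⟨cG, hcG⟩ := Polynomial.natDegree_eq_zero.mp h0
        exact hnwu (by
          rw [← hcG]
          exact Polynomial.isUnit_C.mpr
            (isUnit_iff_ne_zero.mpr (fun h1 => hnw0 (by rw [← hcG, h1, Polynomial.C_0]))))
      omega
    refine ihj G' p1 q1 hdegG' hG'0 ?_ hz1N ?_ hG'eq
    · intro h' hi' hd'
      exact hGfac h' hi' (hd'.trans ⟨pw ^ 2 + qw ^ 2 * mp a, by rw [hGsplit]; ring⟩)
    · intro e he
      refine hprim e (he.trans ⟨w, ?_⟩)
      show z = _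
      rw [hz1]
      ring

/-- every prime containing a monic irreducible `f` is principal, with generator of norm
dividing `f²`. -/
theorem main (h1 : ∀ b : F, b ^ 2 ≠ -1) (h2 : ∀ b c : F, b ^ 2 + c ^ 2 ≠ -1)
    (a : F) (ha : a ≠ 0) :
    ∀ k : ℕ, ∀ f : Polynomial F, f.Monic → Irreducible f → f.natDegree ≤ k →
      ∀ N : Ideal (S a), N.IsPrime → AdjoinRoot.of (gp a) f ∈ N →
      ∃ p q : Polynomial F,
        N = Ideal.span {AdjoinRoot.of (gp a) p + AdjoinRoot.of (gp a) q * root (gp a)} ∧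
          (p ^ 2 + q ^ 2 * mp a) ∣ f ^ 2 := by
  intro k
  induction k using Nat.strong_induction_on with
  | _ k IH =>
  intro f hfm hfi hfk N hN hfN
  have hfp : Prime f := hfi.prime
  have hf1 : 1 ≤ f.natDegree := by
    rcases Nat.eq_zero_or_pos f.natDegree with h0 | h0
    · exact absurd (hfm.natDegree_eq_zero.mp h0 ▸ isUnit_one) hfi.not_isUnit
    · exact h0
  by_cases hex : ∃ p q : Polynomial F, f ∣ (p ^ 2 + q ^ 2 * mp a) ∧ ¬ f ∣ q
  · -- split case
    obtain ⟨p, q, hpq, hfq⟩ := hex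
    have hcop : IsCoprime f q := hfi.coprime_iff_not_dvd.mpr hfq
    obtain ⟨u', v', huv⟩ := hcop
    set d := (p * v') %ₘ f with hd
    have hmod : d + f * ((p * v') /ₘ f) = p * v' := Polynomial.modByMonic_add_div (p * v') f
    obtain ⟨W, hW⟩ := hpq
    have hfd2 : f ∣ d ^ 2 + mp a := by
      refine ⟨v' ^ 2 * W + mp a * (u' * (1 + q * v')) + (-((p * v') /ₘ f)) * (d + p * v'), ?_⟩
      have h1f : (1 : Polynomial F) - q * v' = f * u' := by linear_combination -huv
      have hdp : d - p * v' = f * (-((p * v') /ₘ f)) := by linear_combination hmod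
      linear_combination v' ^ 2 * hW + mp a * (1 + q * v') * h1f + (d + p * v') * hdp
    obtain ⟨G, hG⟩ := hfd2
    have hG0 : G ≠ 0 := by
      intro h0
      rw [h0, mul_zero] at hG
      have hzero : d ^ 2 + 1 ^ 2 * mp a = 0 := by linear_combination hG
      exact one_ne_zero ((aniso h1 a d 1 hzero).2)
    have hdd : d.natDegree < f.natDegree := by
      rcases eq_or_ne d 0 with h0 | h0
      · rw [h0, Polynomial.natDegree_zero]; omega
      · exact Polynomial.natDegree_lt_natDegree h0 (Polynomial.degree_modByMonic_lt _ hfm)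
    have hf2 : 2 ≤ f.natDegree := by
      by_contra hlt
      have hdeg1 : f.natDegree = 1 := by omega
      have hfeq : f = Polynomial.X + Polynomial.C (f.coeff 0) := hfm.eq_X_add_C hdeg1
      have heval := congrArg (Polynomial.eval (-(f.coeff 0))) hG
      have hfe : Polynomial.eval (-(f.coeff 0)) f = 0 := by rw [hfeq]; simp
      simp only [Polynomial.eval_add, Polynomial.eval_pow, Polynomial.eval_mul, hfe, zero_mul,
        mp, Polynomial.eval_X, Polynomial.eval_C] at heval
      apply h2 (Polynomial.eval (-(f.coeff 0)) d / a) ((-(f.coeff 0)) / a)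
      field_simp
      linear_combination heval
    have hGdeg : G.natDegree + f.natDegree ≤ 2 * f.natDegree - 2 := by
      have hfG : (f * G).natDegree = f.natDegree + G.natDegree :=
        Polynomial.natDegree_mul hfi.ne_zero hG0
      have hbound : (d ^ 2 + mp a).natDegree ≤ 2 * f.natDegree - 2 := by
        apply le_trans (Polynomial.natDegree_add_le _ _)
        apply max_le
        · rw [Polynomial.natDegree_pow]; omega
        · rw [mp_natDegree]; omega
      rw [hG, hfG] at hbound
      omega
    have hGfac : ∀ h' : Polynomial F, Irreducible h' → h' ∣ G → h'.natDegree < f.natDegree := by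
      intro h' hi' hd'
      have := Polynomial.natDegree_le_of_dvd hd' hG0
      omega
    have hprodN : (root (gp a) - AdjoinRoot.of (gp a) d) *
        (root (gp a) + AdjoinRoot.of (gp a) d) ∈ N := by
      have hkey : (root (gp a) - AdjoinRoot.of (gp a) d) *
          (root (gp a) + AdjoinRoot.of (gp a) d)
          = AdjoinRoot.of (gp a) f * (-(AdjoinRoot.of (gp a) G)) := by
        have hstep : (root (gp a) - AdjoinRoot.of (gp a) d) *
            (root (gp a) + AdjoinRoot.of (gp a) d)
            = (root (gp a)) ^ 2 - (AdjoinRoot.of (gp a) d) ^ 2 := by ring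
        rw [hstep, rel a,
          show -(AdjoinRoot.of (gp a) (mp a)) - (AdjoinRoot.of (gp a) d) ^ 2
            = -(AdjoinRoot.of (gp a) (mp a) + AdjoinRoot.of (gp a) (d ^ 2)) from
              by rw [map_pow]; ring,
          ← map_add,
          show mp a + d ^ 2 = f * G from by linear_combination hG,
          map_mul]
        ring
      rw [hkey]
      exact Ideal.mul_mem_right _ N hfN
    obtain ⟨d', hGd', hzd'⟩ : ∃ d' : Polynomial F, (d' ^ 2 + mp a = f * G) ∧
        (AdjoinRoot.of (gp a) (-d') + AdjoinRoot.of (gp a) 1 * root (gp a)) ∈ N := by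
      rcases hN.mem_or_mem hprodN with hcase | hcase
      · refine ⟨d, hG, ?_⟩
        rw [show AdjoinRoot.of (gp a) (-d) + AdjoinRoot.of (gp a) 1 * root (gp a)
            = root (gp a) - AdjoinRoot.of (gp a) d from by rw [map_neg, map_one]; ring]
        exact hcase
      · refine ⟨-d, by linear_combination hG, ?_⟩
        rw [show AdjoinRoot.of (gp a) (-(-d)) + AdjoinRoot.of (gp a) 1 * root (gp a)
            = root (gp a) + AdjoinRoot.of (gp a) d from by rw [neg_neg, map_one]; ring]
        exact hcase
    refine inner a f hfi N hN hfN ?_ G.natDegree G (-d') 1 le_rfl hG0 hGfac hzd' ?_ ?_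
    · intro h hm hi hlt M hM hhM
      exact IH h.natDegree (lt_of_lt_of_le hlt hfk) h hm hi le_rfl M hM hhM
    · intro e he
      obtain ⟨h1', h2'⟩ := (of_dvd a e (-d') 1).mp he
      exact isUnit_of_dvd_one h2'
    · linear_combination hGd'
  · -- inert case
    push_neg at hex
    refine ⟨f, 0, ?_, ⟨1, by ring⟩⟩
    rw [show Ideal.span {AdjoinRoot.of (gp a) f + AdjoinRoot.of (gp a) 0 * root (gp a)}
        = Ideal.span {AdjoinRoot.of (gp a) f} from by rw [map_zero, zero_mul, add_zero]]
    have hcom := comap_eq a N hN f hfi hfN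
    apply le_antisymm
    · intro s hs
      obtain ⟨u, v, rfl⟩ := rep a s
      have hnorm : AdjoinRoot.of (gp a) (u ^ 2 + v ^ 2 * mp a) ∈ N := by
        rw [← normEq a u v]
        exact Ideal.mul_mem_right _ N hs
      have hfd : f ∣ u ^ 2 + v ^ 2 * mp a := by
        have hmem : u ^ 2 + v ^ 2 * mp a ∈ Ideal.comap (AdjoinRoot.of (gp a)) N := hnorm
        rw [hcom] at hmem
        exact Ideal.mem_span_singleton.mp hmem
      have hv : f ∣ v := hex u v hfd
      have hu : f ∣ u := by
        apply hfp.dvd_of_dvd_pow (n := 2)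
        have hvm : f ∣ v ^ 2 * mp a := (dvd_pow hv two_ne_zero).mul_right (mp a)
        have hsub := dvd_sub hfd hvm
        simpa using hsub
      exact Ideal.mem_span_singleton.mpr ((of_dvd a f u v).mpr ⟨hu, hv⟩)
    · rw [Ideal.span_le, Set.singleton_subset_iff]
      exact hfN

theorem spir (h1 : ∀ b : F, b ^ 2 ≠ -1) (h2 : ∀ b c : F, b ^ 2 + c ^ 2 ≠ -1)
    (a : F) (ha : a ≠ 0) : IsPrincipalIdealRing (S a) := by
  apply IsPrincipalIdealRing.of_prime
  intro N hN
  by_cases hbot : N = ⊥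
  · rw [hbot]; exact ⟨⟨0, (Ideal.span_zero).symm⟩⟩
  · obtain ⟨s, hsN, hs0⟩ := Submodule.exists_mem_ne_zero_of_ne_bot hbot
    obtain ⟨u, v, rfl⟩ := rep a s
    have hns : u ^ 2 + v ^ 2 * mp a ≠ 0 := by
      intro h0
      obtain ⟨hu0, hv0⟩ := aniso h1 a u v h0
      apply hs0
      simp [hu0, hv0]
    have hnsN : u ^ 2 + v ^ 2 * mp a ∈ Ideal.comap (AdjoinRoot.of (gp a)) N := by
      rw [Ideal.mem_comap, ← normEq a u v]
      exact Ideal.mul_mem_right _ N hsN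
    -- the comap is a nonzero prime of F[X]
    obtain ⟨w, hw⟩ := (IsPrincipalIdealRing.principal (Ideal.comap (AdjoinRoot.of (gp a)) N)).principal
    have hw0 : w ≠ 0 := by
      intro h0
      rw [h0] at hw
      rw [hw] at hnsN
      exact hns (by simpa [zero_dvd_iff] using Ideal.mem_span_singleton.mp hnsN)
    have hcomp : (Ideal.comap (AdjoinRoot.of (gp a)) N).IsPrime := hN.comap _
    rw [hw] at hcomp
    have hwp : Prime w := (Ideal.span_singleton_prime hw0).mp hcomp
    obtain ⟨f, hfm, hfi, hfdvd⟩ := Polynomial.exists_monic_irreducible_factor w hwp.not_unit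
    have hassoc : Associated f w := hfi.associated_of_dvd hwp.irreducible hfdvd
    have hfN : AdjoinRoot.of (gp a) f ∈ N := by
      have hmem : f ∈ Ideal.comap (AdjoinRoot.of (gp a)) N := by
        rw [hw]
        exact Ideal.mem_span_singleton.mpr hassoc.symm.dvd
      exact hmem
    obtain ⟨p, q, hNspan, -⟩ :=
      main h1 h2 a ha f.natDegree f hfm hfi le_rfl N hN hfN
    exact ⟨⟨_, hNspan⟩⟩

noncomputable def Pm (a : F) : MvPolynomial (Fin 2) F :=
  (MvPolynomial.X 0) ^ 2 + (MvPolynomial.X 1) ^ 2 + MvPolynomial.C (a ^ 2)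

abbrev Rq (a : F) := MvPolynomial (Fin 2) F ⧸ Ideal.span {Pm a}

noncomputable def toS (a : F) : MvPolynomial (Fin 2) F →+* S a :=
  MvPolynomial.eval₂Hom ((AdjoinRoot.of (gp a)).comp Polynomial.C)
    (fun i => if i = 0 then AdjoinRoot.of (gp a) Polynomial.X else root (gp a))

theorem toS_X0 (a : F) : toS a (MvPolynomial.X 0) = AdjoinRoot.of (gp a) Polynomial.X := by
  simp [toS]

theorem toS_X1 (a : F) : toS a (MvPolynomial.X 1) = root (gp a) := by
  simp [toS]

theorem toS_C (a : F) (r : F) : toS a (MvPolynomial.C r) = AdjoinRoot.of (gp a) (Polynomial.C r) := by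
  simp [toS]

theorem toS_Pm (a : F) : toS a (Pm a) = 0 := by
  rw [Pm, map_add, map_add, map_pow, map_pow, toS_X0, toS_X1, toS_C, rel a, mp]
  rw [map_add, map_pow]
  ring

noncomputable def Phi (a : F) : Rq a →+* S a :=
  Ideal.Quotient.lift _ (toS a) (by
    intro x hx
    rw [Ideal.mem_span_singleton] at hx
    obtain ⟨c, rfl⟩ := hx
    rw [map_mul, toS_Pm, zero_mul])

theorem Phi_mk (a : F) (x : MvPolynomial (Fin 2) F) :
    Phi a (Ideal.Quotient.mk _ x) = toS a x := rfl

noncomputable def baseR (a : F) : F →+* Rq a :=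
  (Ideal.Quotient.mk (Ideal.span {Pm a})).comp MvPolynomial.C

noncomputable def ofA (a : F) : Polynomial F →+* Rq a :=
  Polynomial.eval₂RingHom (baseR a) (Ideal.Quotient.mk _ (MvPolynomial.X 0))

theorem ofA_C (a : F) (r : F) :
    ofA a (Polynomial.C r) = Ideal.Quotient.mk _ (MvPolynomial.C r) := by
  simp [ofA, baseR]

theorem ofA_X (a : F) : ofA a Polynomial.X = Ideal.Quotient.mk _ (MvPolynomial.X 0) := by
  simp [ofA]

theorem ofA_mp (a : F) : ofA a (mp a)
    = Ideal.Quotient.mk _ ((MvPolynomial.X 0) ^ 2 + MvPolynomial.C (a ^ 2)) := by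
  rw [mp, map_add, map_pow, ofA_X, ofA_C, ← map_pow, ← map_add]

noncomputable def Psi (a : F) : S a →+* Rq a :=
  AdjoinRoot.lift (ofA a) (Ideal.Quotient.mk _ (MvPolynomial.X 1)) (by
    rw [eval₂_gp a (ofA a)]
    rw [ofA_mp, ← map_pow, ← map_add]
    rw [show (MvPolynomial.X 1 : MvPolynomial (Fin 2) F) ^ 2
        + ((MvPolynomial.X 0) ^ 2 + MvPolynomial.C (a ^ 2)) = Pm a from by rw [Pm]; ring]
    exact Ideal.Quotient.eq_zero_iff_mem.mpr (Ideal.subset_span rfl))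

theorem Psi_of (a : F) (p : Polynomial F) :
    Psi a (AdjoinRoot.of (gp a) p) = ofA a p := AdjoinRoot.lift_of _

theorem Psi_root (a : F) :
    Psi a (root (gp a)) = Ideal.Quotient.mk _ (MvPolynomial.X 1) := AdjoinRoot.lift_root _

theorem Phi_ofA (a : F) (p : Polynomial F) : Phi a (ofA a p) = AdjoinRoot.of (gp a) p := by
  have hcomp : (Phi a).comp (ofA a) = AdjoinRoot.of (gp a) := by
    apply Polynomial.ringHom_ext'
    · apply RingHom.ext
      intro r
      simp only [RingHom.comp_apply]
      rw [ofA_C, Phi_mk, toS_C]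
    · simp only [RingHom.comp_apply]
      rw [ofA_X, Phi_mk, toS_X0]
  exact RingHom.congr_fun hcomp p

theorem PsiPhi (a : F) : (Psi a).comp (Phi a) = RingHom.id (Rq a) := by
  apply Ideal.Quotient.ringHom_ext
  apply MvPolynomial.ringHom_ext
  · intro r
    simp only [RingHom.comp_apply, RingHom.id_apply, Phi_mk, toS_C, Psi_of, ofA_C]
  · intro i
    fin_cases i
    · show Psi a (Phi a (Ideal.Quotient.mk _ (MvPolynomial.X 0)))
        = Ideal.Quotient.mk _ (MvPolynomial.X 0)
      simp only [Phi_mk, toS_X0, Psi_of, ofA_X]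
    · show Psi a (Phi a (Ideal.Quotient.mk _ (MvPolynomial.X 1)))
        = Ideal.Quotient.mk _ (MvPolynomial.X 1)
      simp only [Phi_mk, toS_X1, Psi_root]

theorem PhiPsi (a : F) : (Phi a).comp (Psi a) = RingHom.id (S a) := by
  apply RingHom.ext
  intro s
  obtain ⟨p, q, rfl⟩ := rep a s
  simp only [RingHom.comp_apply, map_add, map_mul, RingHom.id_apply, Psi_of, Psi_root,
    Phi_ofA, Phi_mk, toS_X1]

noncomputable def equivRS (a : F) : Rq a ≃+* S a :=
{ toFun := Phi a,
  invFun := Psi a,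
  left_inv := fun x => RingHom.congr_fun (PsiPhi a) x,
  right_inv := fun s => RingHom.congr_fun (PhiPsi a) s,
  map_mul' := map_mul (Phi a),
  map_add' := map_add (Phi a) }

end S18
/-- Let `F` be a formally real field (`−1` is not a sum of squares
in `F`) and let `a ∈ F` be nonzero.  Then `F[X,Y]/(X² + Y² + a²)` (an integral
domain) is a unique factorization domain. -/
theorem UFD_of_formally_real (F : Type) [Field F]
    (hFR : ∀ (n : ℕ) (f : Fin n → F), (∑ i, f i ^ 2) ≠ -1)
    (a : F) (ha : a ≠ 0)
    [IsDomain (MvPolynomial (Fin 2) F ⧸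
      Ideal.span {(X 0 : MvPolynomial (Fin 2) F) ^ 2 + (X 1 : MvPolynomial (Fin 2) F) ^ 2 +
        C (a ^ 2)})] :
    UniqueFactorizationMonoid (MvPolynomial (Fin 2) F ⧸
      Ideal.span {(X 0 : MvPolynomial (Fin 2) F) ^ 2 + (X 1 : MvPolynomial (Fin 2) F) ^ 2 +
        C (a ^ 2)}) := by
  have h1 : ∀ b : F, b ^ 2 ≠ -1 := by
    intro b hb
    apply hFR 1 ![b]
    simpa using hb
  have h2 : ∀ b c : F, b ^ 2 + c ^ 2 ≠ -1 := by
    intro b c hbc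
    apply hFR 2 ![b, c]
    simpa [Fin.sum_univ_two] using hbc
  haveI hdomR : IsDomain (S18.Rq a) := by assumption
  haveI hdomS : IsDomain (S18.S a) :=
    MulEquiv.isDomain (S18.Rq a) (S18.equivRS a).symm.toMulEquiv
  haveI hpir : IsPrincipalIdealRing (S18.S a) := S18.spir h1 h2 a ha
  haveI hufm : UniqueFactorizationMonoid (S18.S a) :=
    PrincipalIdealRing.to_uniqueFactorizationMonoid
  exact MulEquiv.uniqueFactorizationMonoid (S18.equivRS a).symm.toMulEquiv hufm
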